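/- The linear operators φ and ω agree on ab-monomials beginning with the letter a: φ(a·v) = ω(a·v) for every ab-monomial v. -/

import Mathlib

open scoped TensorProduct
open scoped Classical

noncomputable section

abbrev Alg : Type := MonoidAlgebra ℤ (FreeMonoid Bool)

def va : Alg := MonoidAlgebra.of ℤ (FreeMonoid Bool) (FreeMonoid.of false)
def vb : Alg := MonoidAlgebra.of ℤ (FreeMonoid Bool) (FreeMonoid.of true)

def monoOf (l : List Bool) : Alg := MonoidAlgebra.of ℤ (FreeMonoid Bool) (FreeMonoid.ofList l)

def toF (x : Alg) : FreeMonoid Bool →₀ ℤ := x.coeff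

/-- The weight of a chain encoded as a strictly increasing map `f : Fin (k+1) → P`. -/
def wtChain {P : Type} (ρ : P → ℕ) {k : ℕ} (f : Fin (k+1) → P) : Alg :=
  (List.ofFn (fun i : Fin k =>
    (va - vb) ^ (ρ (f i.succ) - ρ (f i.castSucc) - 1) *
      (if (i : ℕ) + 1 < k then vb else 1))).prod

def zetaChain {P : Type} (zb : P → P → ℤ) {k : ℕ} (f : Fin (k+1) → P) : ℤ :=
  ∏ i : Fin k, zb (f i.castSucc) (f i.succ)

/-- The ab-index of the interval `[lo, hi]` of a quasi-graded poset `(P, ρ, zb)`. -/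
def PsiI {P : Type} [Fintype P] [PartialOrder P] (ρ : P → ℕ) (zb : P → P → ℤ)
    (lo hi : P) : Alg :=
  ∑ k ∈ Finset.range (Fintype.card P + 1),
    ∑ f : Fin (k+1) → P,
      if StrictMono f ∧ f 0 = lo ∧ f (Fin.last k) = hi
      then zetaChain zb f • wtChain ρ f else 0

/-- The algebra map `κ` with `κ(a) = a - b`, `κ(b) = 0`. -/
def kappa : Alg →ₐ[ℤ] Alg :=
  MonoidAlgebra.lift ℤ Alg (FreeMonoid Bool)
    (FreeMonoid.lift (fun s => if s then 0 else va - vb))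

/-- The algebra map `λ̄` with `λ̄(a) = 0`, `λ̄(b) = a - b`. -/
def lambdabar : Alg →ₐ[ℤ] Alg :=
  MonoidAlgebra.lift ℤ Alg (FreeMonoid Bool)
    (FreeMonoid.lift (fun s => if s then va - vb else 0))

/-- `η` on monomials: `b^m a^k ↦ 2 (a-b)^(m+k)`, other monomials to `0`. -/
def etaMon (w : FreeMonoid Bool) : Alg :=
  if ∃ m k : ℕ, FreeMonoid.toList w = List.replicate m true ++ List.replicate k false
  then (2 : ℤ) • (va - vb) ^ (FreeMonoid.toList w).length else 0

def etaOp (x : Alg) : Alg := (toF x).sum fun w c => c • etaMon w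

/-- The letter-deletion coproduct on `Z⟨a,b⟩`. -/
def Delta (x : Alg) : Alg ⊗[ℤ] Alg :=
  (toF x).sum fun w c => c •
    ∑ i ∈ Finset.range (FreeMonoid.toList w).length,
      monoOf ((FreeMonoid.toList w).take i) ⊗ₜ[ℤ] monoOf ((FreeMonoid.toList w).drop (i+1))

/-- The Sweedler-style convolution `x ↦ Σ F(x₍₁₎) · b · G(x₍₂₎)`. -/
def sweedler (F G : Alg → Alg) (x : Alg) : Alg :=
  (toF x).sum fun w c => c •
    ∑ i ∈ Finset.range (FreeMonoid.toList w).length,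
      F (monoOf ((FreeMonoid.toList w).take i)) * vb *
        G (monoOf ((FreeMonoid.toList w).drop (i+1)))

/-- `phiAux n = φ_{n+1}`, defined by `φ₁ = κ` and `φ_{k+1}(w) = Σ φ_k(w₍₁₎) · b · η(w₍₂₎)`. -/
def phiAux : ℕ → Alg → Alg
  | 0 => fun x => kappa x
  | (n+1) => fun x => sweedler (phiAux n) etaOp x

def maxLen (x : Alg) : ℕ := (toF x).support.sup fun w => (FreeMonoid.toList w).length

/-- The operator `φ = Σ_{k ≥ 1} φ_k` (the sum is finite on any given polynomial). -/
def phi (x : Alg) : Alg := ∑ k ∈ Finset.range (maxLen x + 1), phiAux k x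

/-- `ω` on a monomial: replace each occurrence of `ab` by `2d` and remaining letters by `c`. -/
def omegaList : List Bool → Alg
  | [] => 1
  | false :: true :: rest => ((2:ℤ) • (va * vb + vb * va)) * omegaList rest
  | _ :: rest => (va + vb) * omegaList rest

def omegaOp (x : Alg) : Alg := (toF x).sum fun w c => c • omegaList (FreeMonoid.toList w)

/-- The operator `G(w) = φ(w)·b + Σ φ(w₍₁₎)·b·λ̄(w₍₂₎)·(a-b)`. -/
def Gop (w : Alg) : Alg := phi w * vb + sweedler phi (fun y => lambdabar y) w * (va - vb)

/-- The reversal map `u ↦ u*` reading each monomial backwards. -/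
def revOp (x : Alg) : Alg :=
  (toF x).sum fun w c =>
    MonoidAlgebra.single (FreeMonoid.ofList (FreeMonoid.toList w).reverse) c

/-- `H'` deletes the last letter of each monomial, `H'(1) = 0`. -/
def Hp (x : Alg) : Alg :=
  (toF x).sum fun w c => if w = 1 then 0 else c • monoOf ((FreeMonoid.toList w).dropLast)

end
noncomputable section Aux

def ee : Alg := va - vb
def cc : Alg := va + vb
def dd : Alg := 2 * (va * vb + vb * va)

lemma two_zsmul_eq (x : Alg) : (2:ℤ) • x = 2 * x := by
  rw [zsmul_eq_mul]; norm_num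

lemma toF_mono (l : List Bool) : toF (monoOf l) = Finsupp.single (FreeMonoid.ofList l) 1 := rfl

lemma omegaOp_mono (l : List Bool) : omegaOp (monoOf l) = omegaList l := by
  unfold omegaOp
  rw [toF_mono, Finsupp.sum_single_index (by simp)]
  simp

lemma etaOp_mono (l : List Bool) : etaOp (monoOf l) = etaMon (FreeMonoid.ofList l) := by
  unfold etaOp
  rw [toF_mono, Finsupp.sum_single_index (by simp)]
  simp

lemma sweedler_mono (F G : Alg → Alg) (l : List Bool) : sweedler F G (monoOf l) =
    ∑ i ∈ Finset.range l.length, F (monoOf (l.take i)) * vb * G (monoOf (l.drop (i+1))) := by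
  unfold sweedler
  rw [toF_mono, Finsupp.sum_single_index (by simp)]
  simp

lemma maxLen_mono (l : List Bool) : maxLen (monoOf l) = l.length := by
  unfold maxLen
  rw [toF_mono, Finsupp.support_single_ne_zero _ one_ne_zero]
  simp

lemma phiAux_eq_zero : ∀ (n : ℕ) (l : List Bool), l.length < n → phiAux n (monoOf l) = 0
  | 0, _, h => absurd h (Nat.not_lt_zero _)
  | (n+1), l, h => by
      show sweedler (phiAux n) etaOp (monoOf l) = 0
      rw [sweedler_mono]
      refine Finset.sum_eq_zero fun i hi => ?_
      rw [phiAux_eq_zero n (l.take i) (by simp at hi ⊢; omega), zero_mul, zero_mul]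

lemma phi_mono (l : List Bool) :
    phi (monoOf l) = ∑ k ∈ Finset.range (l.length + 1), phiAux k (monoOf l) := by
  unfold phi; rw [maxLen_mono]

lemma phi_nil : phi (monoOf []) = 1 := by
  rw [phi_mono]
  simp only [List.length_nil, zero_add, Finset.range_one, Finset.sum_singleton]
  show kappa (monoOf []) = 1
  rw [show monoOf [] = 1 from rfl, map_one]

lemma phi_rec (l : List Bool) : phi (monoOf l) = kappa (monoOf l) +
    ∑ i ∈ Finset.range l.length,
      phi (monoOf (l.take i)) * vb * etaMon (FreeMonoid.ofList (l.drop (i+1))) := by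
  rw [phi_mono, Finset.sum_range_succ']
  rw [add_comm]
  congr 1
  have h1 : ∀ k, phiAux (k+1) (monoOf l) = ∑ i ∈ Finset.range l.length,
      phiAux k (monoOf (l.take i)) * vb * etaMon (FreeMonoid.ofList (l.drop (i+1))) := by
    intro k
    show sweedler (phiAux k) etaOp (monoOf l) = _
    rw [sweedler_mono]
    exact Finset.sum_congr rfl fun i _ => by rw [etaOp_mono]
  rw [Finset.sum_congr rfl fun k _ => h1 k, Finset.sum_comm]
  refine Finset.sum_congr rfl fun i hi => ?_
  rw [← Finset.sum_mul, ← Finset.sum_mul]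
  congr 2
  have hi' : i < l.length := Finset.mem_range.mp hi
  have hlen : (l.take i).length = i := by simp; omega
  rw [phi_mono, hlen]
  refine (Finset.sum_subset (Finset.range_subset_range.mpr (by omega)) fun k _ hk => ?_).symm
  exact phiAux_eq_zero k _ (by rw [hlen]; simp at hk ⊢; omega)

lemma monoOf_append (s t : List Bool) : monoOf (s ++ t) = monoOf s * monoOf t := by
  unfold monoOf
  rw [← map_mul]
  rfl

lemma mono_cons (x : Bool) (xs : List Bool) : monoOf (x :: xs) = monoOf [x] * monoOf xs := by
  rw [← monoOf_append]; rfl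

lemma kappa_letter (x : Bool) : kappa (monoOf [x]) = if x then 0 else va - vb := by
  unfold kappa monoOf
  show (MonoidAlgebra.lift ℤ Alg (FreeMonoid Bool) _) (MonoidAlgebra.of ℤ (FreeMonoid Bool) (FreeMonoid.of x)) = _
  rw [MonoidAlgebra.lift_of]
  simp

lemma kappa_true_mem : ∀ l : List Bool, true ∈ l → kappa (monoOf l) = 0 := by
  intro l
  induction l with
  | nil => simp
  | cons x xs ih =>
    intro hmem
    rw [mono_cons, map_mul]
    rcases List.mem_cons.mp hmem with h | h
    · rw [kappa_letter, ← h, if_pos rfl, zero_mul]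
    · rw [ih h, mul_zero]

lemma kappa_rep_false : ∀ K : ℕ, kappa (monoOf (List.replicate K false)) = ee ^ K
  | 0 => by
      show kappa (monoOf []) = ee ^ 0
      rw [show monoOf [] = 1 from rfl, map_one, pow_zero]
  | (K+1) => by
      rw [List.replicate_succ, mono_cons, map_mul, kappa_letter, kappa_rep_false K,
        pow_succ' (ee), if_neg (by simp)]
      rfl

lemma etaMon_good (m k : ℕ) :
    etaMon (FreeMonoid.ofList (List.replicate m true ++ List.replicate k false)) = 2 * ee ^ (m+k) := by
  unfold etaMon
  rw [if_pos ⟨m, k, by simp⟩]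
  rw [two_zsmul_eq,
    show (FreeMonoid.toList (FreeMonoid.ofList (List.replicate m true ++ List.replicate k false))).length
      = m + k from by simp]
  rfl

lemma rep_ne : ∀ (m k : ℕ) (u v : List Bool),
    List.replicate m true ++ List.replicate k false ≠ u ++ false :: true :: v
  | 0, k, u, v => fun h => by
      have : true ∈ List.replicate k false := by
        rw [show List.replicate 0 true = [] from rfl, List.nil_append] at h
        rw [h]; simp
      simp at this
  | (m+1), k, [], v => fun h => by simp [List.replicate_succ] at h
  | (m+1), k, (x::u), v => fun h => by
      rw [List.replicate_succ] at h
      simp only [List.cons_append, List.cons.injEq] at h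
      exact rep_ne m k u v h.2

lemma etaMon_bad (s v : List Bool) : etaMon (FreeMonoid.ofList (s ++ false :: true :: v)) = 0 := by
  unfold etaMon
  rw [if_neg]
  rintro ⟨m, k, h⟩
  rw [FreeMonoid.toList_ofList] at h
  exact rep_ne m k s v h.symm

lemma omega_nil : omegaList [] = 1 := rfl
lemma omega_true (r : List Bool) : omegaList (true :: r) = cc * omegaList r := by
  simp [omegaList, cc]
lemma omega_ft (r : List Bool) : omegaList (false :: true :: r) = dd * omegaList r := by
  show ((2:ℤ) • (va * vb + vb * va)) * omegaList r = _
  rw [two_zsmul_eq]; rfl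
lemma omega_ff (r : List Bool) : omegaList (false :: false :: r) = cc * omegaList (false :: r) := by
  simp [omegaList, cc]
lemma omega_fnil : omegaList [false] = cc := by
  simp [omegaList, cc]

lemma omega_repf : ∀ k : ℕ, omegaList (List.replicate k false) = cc ^ k
  | 0 => by rw [pow_zero]; rfl
  | 1 => by rw [pow_one]; exact omega_fnil
  | (k+2) => by
      rw [List.replicate_succ, List.replicate_succ, omega_ff, ← List.replicate_succ,
        omega_repf (k+1)]
      exact (pow_succ' cc (k+1)).symm

lemma omega_reptf : ∀ m k : ℕ,
    omegaList (List.replicate m true ++ List.replicate k false) = cc ^ (m + k)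
  | 0, k => by
      rw [show List.replicate 0 true = [] from rfl, List.nil_append, omega_repf, Nat.zero_add]
  | (m+1), k => by
      rw [List.replicate_succ, List.cons_append, omega_true, omega_reptf m k, ← pow_succ']
      congr 1
      omega

lemma omega_block (M k : ℕ) :
    omegaList (false :: (List.replicate (M+1) true ++ List.replicate k false)) = dd * cc ^ (M + k) := by
  rw [List.replicate_succ, List.cons_append, omega_ft, omega_reptf]

lemma omega_append : ∀ (q u : List Bool),
    omegaList (q ++ false :: u) = omegaList q * omegaList (false :: u)
  | [], u => by rw [List.nil_append, omega_nil, one_mul]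
  | true :: q, u => by
      rw [List.cons_append, omega_true, omega_append q u, omega_true, mul_assoc]
  | false :: true :: q, u => by
      rw [List.cons_append, List.cons_append, omega_ft, omega_append q u, omega_ft, mul_assoc]
  | [false], u => by
      rw [List.singleton_append, omega_ff, omega_fnil]
  | false :: false :: q, u => by
      rw [List.cons_append, List.cons_append, omega_ff, ← List.cons_append,
        omega_append (false :: q) u, omega_ff, mul_assoc]
  termination_by q _ => q.length

lemma telescope (x y : Alg) : ∀ n : ℕ,
    ∑ i ∈ Finset.range n, x^i * (x - y) * y^(n-1-i) = x^n - y^n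
  | 0 => by simp
  | (n+1) => by
      rw [Finset.sum_range_succ]
      have h : ∀ i ∈ Finset.range n, x^i * (x-y) * y^(n+1-1-i) = (x^i * (x-y) * y^(n-1-i)) * y := by
        intro i hi
        simp only [Finset.mem_range] at hi
        rw [show n+1-1-i = (n-1-i)+1 from by omega, pow_succ, ← mul_assoc]
      rw [Finset.sum_congr rfl h, ← Finset.sum_mul, telescope x y n,
        show n+1-1-n = 0 from by omega, pow_zero, mul_one, pow_succ, pow_succ]
      noncomm_ring

lemma hce : cc - ee = 2 * vb := by unfold cc ee; noncomm_ring

lemma keyA (K : ℕ) :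
    ee ^ K + ∑ i ∈ Finset.range K, cc^i * vb * (2 * ee^(K-1-i)) = cc ^ K := by
  have h : ∀ i ∈ Finset.range K, cc^i * vb * (2 * ee^(K-1-i)) = cc^i * (cc - ee) * ee^(K-1-i) := by
    intro i _
    rw [hce]
    noncomm_ring
  rw [Finset.sum_congr rfl h, telescope]
  abel

lemma keyB (M k : ℕ) :
    vb * (2 * ee ^ (M + 1 + k)) +
      ((cc * vb * (2 * ee ^ (M + k)) +
        ∑ j ∈ Finset.range M, dd * cc ^ j * vb * (2 * ee ^ (M + k - 1 - j))) +
       ∑ t ∈ Finset.range k, dd * cc ^ (M + t) * vb * (2 * ee ^ (k - 1 - t))) = dd * cc ^ (M + k) := by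
  have hcomb : (∑ j ∈ Finset.range M, dd * cc ^ j * vb * (2 * ee ^ (M + k - 1 - j))) +
      ∑ t ∈ Finset.range k, dd * cc ^ (M + t) * vb * (2 * ee ^ (k - 1 - t)) =
      ∑ j ∈ Finset.range (M + k), dd * cc ^ j * vb * (2 * ee ^ (M + k - 1 - j)) := by
    rw [Finset.sum_range_add]
    congr 1
    refine Finset.sum_congr rfl fun t ht => ?_
    simp only [Finset.mem_range] at ht
    congr 3
    omega
  have hper : ∀ j ∈ Finset.range (M + k),
      dd * cc ^ j * vb * (2 * ee ^ (M + k - 1 - j)) = dd * (cc^j * (cc - ee) * ee^(M+k-1-j)) := by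
    intro j _
    rw [hce]
    noncomm_ring
  have hsum : (∑ j ∈ Finset.range (M + k), dd * cc ^ j * vb * (2 * ee ^ (M + k - 1 - j))) =
      dd * (cc ^ (M+k) - ee ^ (M+k)) := by
    rw [Finset.sum_congr rfl hper, ← Finset.mul_sum, telescope]
  rw [add_assoc (cc * vb * (2 * ee ^ (M + k))), hcomb, hsum,
    show M + 1 + k = (M + k) + 1 from by omega, pow_succ']
  generalize ee ^ (M+k) = A
  generalize cc ^ (M+k) = C
  unfold dd cc ee
  noncomm_ring

lemma decomp : ∀ l : List Bool,
    (∃ K, l = List.replicate K false) ∨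
    (∃ M k, l = List.replicate (M+1) true ++ List.replicate k false) ∨
    (∃ q M k, l = q ++ false :: (List.replicate (M+1) true ++ List.replicate k false)) := by
  intro l
  induction l using List.reverseRecOn with
  | nil => exact Or.inl ⟨0, rfl⟩
  | append_singleton u x ih =>
    cases x with
    | false =>
      rcases ih with ⟨K, rfl⟩ | ⟨M, k, rfl⟩ | ⟨q, M, k, rfl⟩
      · exact Or.inl ⟨K+1, by rw [List.replicate_succ']⟩
      · refine Or.inr (Or.inl ⟨M, k+1, ?_⟩)
        rw [List.replicate_succ' (n := k), List.append_assoc]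
      · refine Or.inr (Or.inr ⟨q, M, k+1, ?_⟩)
        rw [List.replicate_succ' (n := k)]
        simp [List.append_assoc]
    | true =>
      rcases ih with ⟨K, rfl⟩ | ⟨M, k, rfl⟩ | ⟨q, M, k, rfl⟩
      · cases K with
        | zero => exact Or.inr (Or.inl ⟨0, 0, rfl⟩)
        | succ K' =>
            refine Or.inr (Or.inr ⟨List.replicate K' false, 0, 0, ?_⟩)
            rw [List.replicate_succ' (n := K')]
            simp
      · cases k with
        | zero =>
            refine Or.inr (Or.inl ⟨M+1, 0, ?_⟩)
            rw [List.replicate_succ' (n := M+1)]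
            simp
        | succ k' =>
            refine Or.inr (Or.inr ⟨List.replicate (M+1) true ++ List.replicate k' false, 0, 0, ?_⟩)
            rw [List.replicate_succ' (n := k')]
            simp [List.append_assoc]
      · cases k with
        | zero =>
            refine Or.inr (Or.inr ⟨q, M+1, 0, ?_⟩)
            rw [List.replicate_succ' (n := M+1)]
            simp
        | succ k' =>
            refine Or.inr (Or.inr
              ⟨q ++ false :: (List.replicate (M+1) true ++ List.replicate k' false), 0, 0, ?_⟩)
            rw [List.replicate_succ' (n := k')]
            simp [List.append_assoc]

end Aux
noncomputable section Main

lemma caseA (K : ℕ)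
    (IH : ∀ l' : List Bool, l'.length < K → phi (monoOf (false :: l')) = omegaList (false :: l')) :
    phi (monoOf (List.replicate (K+1) false)) = omegaList (List.replicate (K+1) false) := by
  rw [phi_rec, kappa_rep_false, omega_repf]
  have hterm : ∀ i ∈ Finset.range (K+1),
      phi (monoOf ((List.replicate (K+1) false).take i)) * vb *
        etaMon (FreeMonoid.ofList ((List.replicate (K+1) false).drop (i+1))) =
      cc^i * vb * (2 * ee^(K+1-1-i)) := by
    intro i hi
    simp only [Finset.mem_range] at hi
    rw [List.take_replicate, List.drop_replicate, show min i (K+1) = i from by omega]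
    have hphi : phi (monoOf (List.replicate i false)) = cc ^ i := by
      cases i with
      | zero => rw [show List.replicate 0 false = [] from rfl, phi_nil, pow_zero]
      | succ i' =>
          rw [List.replicate_succ, IH (List.replicate i' false) (by simp; omega),
            ← List.replicate_succ, omega_repf]
    rw [hphi]
    congr 1
    rw [show K+1-(i+1) = K-i from by omega, show K+1-1-i = K-i from by omega]
    simpa using etaMon_good 0 (K-i)
  rw [show (List.replicate (K+1) false).length = K+1 from by simp,
    Finset.sum_congr rfl hterm]
  exact keyA (K+1)

lemma caseB (qw : List Bool) (M k : ℕ)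
    (hq : qw = [] ∨ ∃ q0, qw = false :: q0)
    (IH : ∀ l' : List Bool, l'.length + 1 < qw.length + 1 + (M+1) + k →
        phi (monoOf (false :: l')) = omegaList (false :: l')) :
    phi (monoOf (qw ++ false :: (List.replicate (M+1) true ++ List.replicate k false))) =
    omegaList (qw ++ false :: (List.replicate (M+1) true ++ List.replicate k false)) := by
  set blk : List Bool := List.replicate (M+1) true ++ List.replicate k false with hblk
  set w : List Bool := qw ++ false :: blk with hw
  set Q : ℕ := qw.length with hQ
  have hblklen : blk.length = (M+1) + k := by simp [hblk]
  have hphiq : phi (monoOf qw) = omegaList qw := by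
    rcases hq with rfl | ⟨q0, rfl⟩
    · rw [phi_nil, omega_nil]
    · exact IH q0 (by simp [hQ]; omega)
  have key : ∀ s : List Bool, s.length < (M+1) + k →
      phi (monoOf (qw ++ false :: s)) = omegaList qw * omegaList (false :: s) := by
    intro s hs
    rcases hq with rfl | ⟨q0, rfl⟩
    · rw [List.nil_append, omega_nil, one_mul]
      exact IH s (by simpa using by omega)
    · rw [List.cons_append]
      rw [IH (q0 ++ false :: s) (by simp [hQ] at *; omega)]
      rw [← List.cons_append, omega_append]
  rw [phi_rec]
  rw [kappa_true_mem _ (by simp [hw, hblk, List.replicate_succ]), zero_add]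
  have hL : w.length = Q + (1 + ((M+1) + k)) := by
    simp only [hw, List.length_append, List.length_cons, hblklen, hQ]
    omega
  rw [hL, Finset.sum_range_add]
  -- first chunk vanishes
  have hfirst : ∀ i ∈ Finset.range Q,
      phi (monoOf (w.take i)) * vb * etaMon (FreeMonoid.ofList (w.drop (i+1))) = 0 := by
    intro i hi
    simp only [Finset.mem_range] at hi
    have hdrop : w.drop (i+1) =
        (qw.drop (i+1)) ++ false :: true :: (List.replicate M true ++ List.replicate k false) := by
      rw [hw, List.drop_append, show i+1 - qw.length = 0 from by omega,
        List.drop_zero, hblk, List.replicate_succ]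
      rfl
    rw [hdrop, etaMon_bad, mul_zero]
  rw [Finset.sum_eq_zero hfirst, zero_add, Finset.sum_range_add, Finset.sum_range_one,
    Finset.sum_range_add]
  -- the i = Q term
  have hQterm : phi (monoOf (w.take (Q + 0))) * vb *
      etaMon (FreeMonoid.ofList (w.drop (Q + 0 + 1))) =
      omegaList qw * (vb * (2 * ee ^ (M + 1 + k))) := by
    have ht : w.take (Q + 0) = qw := by
      rw [hw, Nat.add_zero, List.take_append,
        List.take_of_length_le (by omega), show Q - qw.length = 0 from by omega,
        List.take_zero, List.append_nil]
    have hd : w.drop (Q + 0 + 1) = blk := by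
      rw [hw, Nat.add_zero, List.drop_append,
        List.drop_eq_nil_of_le (by omega), show Q + 1 - qw.length = 1 from by omega,
        List.nil_append, List.drop_one]
      rfl
    rw [ht, hd, hblk, etaMon_good, hphiq, mul_assoc]
  rw [hQterm]
  -- the j-range (M+1) sum
  have hjterm : ∀ j ∈ Finset.range (M+1),
      phi (monoOf (w.take (Q + (1 + j)))) * vb *
        etaMon (FreeMonoid.ofList (w.drop (Q + (1 + j) + 1))) =
      omegaList qw * (omegaList (false :: List.replicate j true) * vb * (2 * ee ^ (M + k - j))) := by
    intro j hj
    simp only [Finset.mem_range] at hj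
    have ht : w.take (Q + (1 + j)) = qw ++ false :: List.replicate j true := by
      rw [hw, List.take_append, List.take_of_length_le (by omega),
        show Q + (1 + j) - qw.length = j + 1 from by omega, List.take_succ_cons,
        hblk, List.take_append, List.take_replicate,
        show min j (M+1) = j from by omega,
        show j - (List.replicate (M+1) true).length = 0 from by simp; omega,
        List.take_zero, List.append_nil]
    have hd : w.drop (Q + (1 + j) + 1) = List.replicate (M - j) true ++ List.replicate k false := by
      rw [hw, List.drop_append, List.drop_eq_nil_of_le (by omega),
        show Q + (1 + j) + 1 - qw.length = (j + 1) + 1 from by omega, List.nil_append,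
        List.drop_succ_cons, hblk, List.drop_append, List.drop_replicate,
        show M + 1 - (j+1) = M - j from by omega,
        show j + 1 - (List.replicate (M+1) true).length = 0 from by simp; omega,
        List.drop_zero]
    rw [ht, hd, etaMon_good, key (List.replicate j true) (by simp; omega),
      show M - j + k = M + k - j from by omega, mul_assoc, mul_assoc, mul_assoc]
  rw [Finset.sum_congr rfl hjterm]
  -- the t-range k sum
  have htterm : ∀ t ∈ Finset.range k,
      phi (monoOf (w.take (Q + (1 + ((M+1) + t))))) * vb *
        etaMon (FreeMonoid.ofList (w.drop (Q + (1 + ((M+1) + t)) + 1))) =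
      omegaList qw * (dd * cc ^ (M + t) * vb * (2 * ee ^ (k - 1 - t))) := by
    intro t ht'
    simp only [Finset.mem_range] at ht'
    have ht : w.take (Q + (1 + ((M+1) + t))) =
        qw ++ false :: (List.replicate (M+1) true ++ List.replicate t false) := by
      rw [hw, List.take_append, List.take_of_length_le (by omega),
        show Q + (1 + ((M+1) + t)) - qw.length = ((M+1) + t) + 1 from by omega,
        List.take_succ_cons, hblk, List.take_append,
        List.take_of_length_le (by simp only [List.length_replicate]; omega),
        show (M+1) + t - (List.replicate (M+1) true).length = t from
          by simp only [List.length_replicate]; omega,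
        List.take_replicate, show min t k = t from by omega]
    have hd : w.drop (Q + (1 + ((M+1) + t)) + 1) = List.replicate (k - 1 - t) false := by
      rw [hw, List.drop_append, List.drop_eq_nil_of_le (by omega),
        show Q + (1 + ((M+1) + t)) + 1 - qw.length = (((M+1) + t) + 1) + 1 from by omega,
        List.nil_append, List.drop_succ_cons, hblk, List.drop_append,
        List.drop_eq_nil_of_le (by simp only [List.length_replicate]; omega),
        show (M+1) + t + 1 - (List.replicate (M+1) true).length = t + 1 from
          by simp only [List.length_replicate]; omega,
        List.nil_append, List.drop_replicate, show k - (t+1) = k - 1 - t from by omega]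
    rw [ht, hd, show etaMon (FreeMonoid.ofList (List.replicate (k-1-t) false)) =
        2 * ee ^ (k - 1 - t) from by simpa using etaMon_good 0 (k-1-t),
      key (List.replicate (M+1) true ++ List.replicate t false) (by simp; omega),
      omega_block]
    simp only [mul_assoc]
  rw [Finset.sum_congr rfl htterm]
  -- the j = 0 term and j+1 terms
  rw [Finset.sum_range_succ']
  have hj0 : omegaList qw * (omegaList (false :: List.replicate 0 true) * vb * (2 * ee ^ (M + k - 0))) =
      omegaList qw * (cc * vb * (2 * ee ^ (M + k))) := by
    rw [show List.replicate 0 true = ([] : List Bool) from rfl, omega_fnil, Nat.sub_zero]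
  have hjsucc : ∀ j ∈ Finset.range M,
      omegaList qw * (omegaList (false :: List.replicate (j+1) true) * vb * (2 * ee ^ (M + k - (j+1)))) =
      omegaList qw * (dd * cc ^ j * vb * (2 * ee ^ (M + k - 1 - j))) := by
    intro j hj
    simp only [Finset.mem_range] at hj
    have : omegaList (false :: List.replicate (j+1) true) = dd * cc ^ j := by
      have h := omega_block j 0
      simpa using h
    rw [this, show M + k - (j+1) = M + k - 1 - j from by omega]
  rw [hj0, Finset.sum_congr rfl hjsucc]
  -- collapse and finish with keyB
  rw [← Finset.mul_sum, ← Finset.mul_sum, ← mul_add, ← mul_add, ← mul_add]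
  rw [hw, omega_append, hblk, omega_block]
  congr 1
  rw [add_comm (∑ j ∈ Finset.range M, dd * cc ^ j * vb * (2 * ee ^ (M + k - 1 - j)))
    (cc * vb * (2 * ee ^ (M + k)))]
  exact keyB M k

lemma main_aux : ∀ (n : ℕ) (l : List Bool), l.length ≤ n →
    phi (monoOf (false :: l)) = omegaList (false :: l) := by
  intro n
  induction n with
  | zero =>
      intro l hl
      have hnil : l = [] := List.eq_nil_of_length_eq_zero (Nat.le_zero.mp hl)
      subst hnil
      exact caseA 0 (fun l' h => absurd h (by omega))
  | succ n ih =>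
      intro l hl
      rcases decomp l with ⟨K, rfl⟩ | ⟨M, k, rfl⟩ | ⟨q, M, k, rfl⟩
      · rw [show (false :: List.replicate K false) = List.replicate (K+1) false from
          List.replicate_succ.symm]
        refine caseA K fun l' h => ih l' ?_
        have hK : K ≤ n + 1 := by simpa using hl
        omega
      · exact caseB [] M k (Or.inl rfl) (fun l' h => ih l' (by
          simp only [List.length_nil] at h
          have : (List.replicate (M+1) true ++ List.replicate k false).length = (M+1) + k := by simp
          rw [this] at hl
          omega))
      · exact caseB (false :: q) M k (Or.inr ⟨q, rfl⟩) (fun l' h => ih l' (by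
          simp only [List.length_cons] at h
          have : (q ++ false :: (List.replicate (M+1) true ++ List.replicate k false)).length
              = q.length + 1 + ((M+1) + k) := by
            simp only [List.length_append, List.length_cons, List.length_replicate]; omega
          rw [this] at hl
          omega))

end Main

/-- `φ` and `ω` agree on ab-monomials beginning with the letter `a`. -/
theorem phi_eq_omega_on_a (l : List Bool) :
    phi (monoOf (false :: l)) = omegaOp (monoOf (false :: l)) := by
  rw [omegaOp_mono]
  exact main_aux (false :: l).length.pred l (by simp)
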